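/- For every real t in the range log_3(2) ≤ t ≤ 2/3, the squares S^t_n of side length n^{-t} for n = 1, 2, 3, ... can be packed perfectly into the rectangle of dimensions ζ(2t) × 1. That is, there exist positions (x_n, y_n) ∈ ℝ² for each positive integer n such that each axis-parallel square [x_n, x_n + n^{-t}] × [y_n, y_n + n^{-t}] is contained in the rectangle [0, ζ(2t)] × [0, 1], and the interiors of distinct squares are pairwise disjoint. (The packing is perfect since the total area ∑_{n=1}^∞ n^{-2t} = ζ(2t) equals the area of the rectangle.) -/

import Mathlib

/-- The real zeta function as the series `∑_{i=1}^∞ i^{-s}` (for `s > 1`). -/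
noncomputable def zetaR (s : ℝ) : ℝ := ∑' n : ℕ+, (n : ℝ) ^ (-s)

namespace PerfectPacking

open Real Set Finset Filter

noncomputable def sd (t : ℝ) (k : ℕ) : ℝ := (k : ℝ) ^ (-t)
noncomputable def SR (t : ℝ) (m : ℕ) : ℝ := ∑ k ∈ Finset.range m, sd t (k+1)
noncomputable def SA (t : ℝ) (m : ℕ) : ℝ := ∑ k ∈ Finset.range m, (sd t (k+1))^2

section Arith

variable {t : ℝ}




lemma half_lt_t (h1 : Real.logb 3 2 ≤ t) : 1/2 < t := by
  have h3 : (0:ℝ) < Real.log 3 := Real.log_pos (by norm_num)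
  have hlt : Real.log 3 < 2 * Real.log 2 := by
    have : Real.log 3 < Real.log 4 := Real.log_lt_log (by norm_num) (by norm_num)
    have h4 : Real.log 4 = 2 * Real.log 2 := by
      rw [show (4:ℝ) = 2^(2:ℕ) by norm_num, Real.log_pow]; push_cast; ring
    linarith
  have : 1/2 < Real.logb 3 2 := by
    rw [Real.logb, lt_div_iff₀ h3]; linarith
  linarith

lemma t_pos (h1 : Real.logb 3 2 ≤ t) : 0 < t := lt_trans (by norm_num) (half_lt_t h1)

lemma rpow_le_linear {x q : ℝ} (hx : 0 ≤ x) (hq0 : 0 ≤ q) (hq1 : q ≤ 1) :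
    x ^ q ≤ 1 - q + q * x := by
  have h := Real.geom_mean_le_arith_mean2_weighted hq0 (by linarith : (0:ℝ) ≤ 1 - q) hx
    (zero_le_one) (by ring)
  rw [Real.one_rpow, mul_one] at h
  linarith

lemma tele_up (h1 : Real.logb 3 2 ≤ t) (h2 : t ≤ 2/3) {k : ℕ} (hk : 1 ≤ k) :
    (1 - t) * (k:ℝ) ^ (-t) ≤ (k:ℝ) ^ (1-t) - ((k:ℝ) - 1) ^ (1-t) := by
  have hK1 : (1:ℝ) ≤ (k:ℝ) := by exact_mod_cast hk
  have hK0 : (0:ℝ) < (k:ℝ) := by linarith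
  set q : ℝ := 1 - t with hq
  have hq0 : 0 ≤ q := by rw [hq]; linarith
  have hq1 : q ≤ 1 := by rw [hq]; linarith [t_pos h1]
  have main : (((k:ℝ)-1)/(k:ℝ)) ^ q ≤ 1 - q + q * (((k:ℝ)-1)/(k:ℝ)) :=
    rpow_le_linear (div_nonneg (by linarith) (by linarith)) hq0 hq1
  have hdiv : (((k:ℝ)-1)/(k:ℝ)) ^ q = ((k:ℝ)-1)^q / (k:ℝ)^q :=
    Real.div_rpow (by linarith) (by linarith) q
  have hKq : (0:ℝ) < (k:ℝ) ^ q := Real.rpow_pos_of_pos hK0 q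
  rw [hdiv] at main
  have h3 : ((k:ℝ)-1)^q ≤ (1 - q + q * (((k:ℝ)-1)/(k:ℝ))) * (k:ℝ)^q :=
    (div_le_iff₀ hKq).1 main
  have e1 : (1 - q + q * (((k:ℝ)-1)/(k:ℝ))) * (k:ℝ)^q
      = (k:ℝ)^q - q * ((k:ℝ)^q / (k:ℝ)) := by field_simp; ring
  have e2 : (k:ℝ)^q / (k:ℝ) = (k:ℝ) ^ (-t) := by
    rw [show ((k:ℝ)^q / (k:ℝ)) = (k:ℝ)^q / (k:ℝ)^(1:ℝ) by rw [Real.rpow_one],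
      ← Real.rpow_sub hK0]
    rw [show q - 1 = -t by rw [hq]; ring]
  rw [e1, e2] at h3
  linarith

lemma tele_down (h1 : Real.logb 3 2 ≤ t) (h2 : t ≤ 2/3) {k : ℕ} (hk : 1 ≤ k) :
    (k:ℝ) ^ (-(2*t-1)) - ((k:ℝ)+1) ^ (-(2*t-1)) ≤ (2*t-1) * (k:ℝ) ^ (-(2*t)) := by
  have hK1 : (1:ℝ) ≤ (k:ℝ) := by exact_mod_cast hk
  have hK0 : (0:ℝ) < (k:ℝ) := by linarith
  set r : ℝ := 2*t - 1 with hrdef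
  have hr0 : 0 < r := by rw [hrdef]; linarith [half_lt_t h1]
  have hr1 : r ≤ 1 := by rw [hrdef]; linarith
  set K : ℝ := (k:ℝ) with hKdef
  have ha : (0:ℝ) < K ^ r := Real.rpow_pos_of_pos hK0 r
  have hb : (0:ℝ) < (K+1) ^ r := Real.rpow_pos_of_pos (by linarith) r
  have hbern : (1 + 1/K) ^ r ≤ 1 + r/K := by
    have hh := rpow_le_linear (x := 1 + 1/K) (q := r) (by positivity) hr0.le hr1
    have e : 1 - r + r * (1 + 1/K) = 1 + r/K := by field_simp; try ring
    linarith [e ▸ hh]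
  have hmul : (K+1) ^ r = K ^ r * (1 + 1/K) ^ r := by
    rw [← Real.mul_rpow hK0.le (by positivity)]
    congr 1; field_simp
  have hBle : (K+1) ^ r ≤ K ^ r * (1 + r/K) := by
    rw [hmul]; exact mul_le_mul_of_nonneg_left hbern ha.le
  have eA : K ^ (-(2*t-1)) = (K ^ r)⁻¹ := by rw [← hrdef, Real.rpow_neg hK0.le]
  have eB : (K+1) ^ (-(2*t-1)) = ((K+1) ^ r)⁻¹ := by
    rw [← hrdef, Real.rpow_neg (by linarith)]
  have eC : K ^ (-(2*t)) = (K ^ r * K)⁻¹ := by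
    rw [show -(2*t) = -(r+1) by rw [hrdef]; ring, Real.rpow_neg hK0.le,
      Real.rpow_add hK0, Real.rpow_one]
  rw [eA, eB, eC]
  have h5 : (K ^ r * (1 + r/K))⁻¹ ≤ ((K+1) ^ r)⁻¹ := inv_anti₀ hb hBle
  have key : (K ^ r)⁻¹ - r * (K ^ r * K)⁻¹ ≤ (K ^ r * (1 + r/K))⁻¹ := by
    have e3 : (K ^ r)⁻¹ - r * (K ^ r * K)⁻¹ = (K - r)/(K ^ r * K) := by
      field_simp
    have e4 : (K ^ r * (1 + r/K))⁻¹ = K / (K ^ r * (K + r)) := by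
      rw [show K ^ r * (1 + r/K) = (K ^ r * (K + r))/K by field_simp; try ring, inv_div]
    rw [e3, e4, div_le_div_iff₀ (by positivity) (by positivity)]
    nlinarith [mul_nonneg ha.le (sq_nonneg r), ha.le, sq_nonneg r]
  linarith




lemma sd_nonneg (t : ℝ) (k : ℕ) : 0 ≤ sd t k := Real.rpow_nonneg (Nat.cast_nonneg k) _

lemma sd_pos' {k : ℕ} (hk : 1 ≤ k) : 0 < sd t k := by
  have : (0:ℝ) < (k:ℝ) := by exact_mod_cast hk
  exact Real.rpow_pos_of_pos this _

lemma sd_one : sd t 1 = 1 := by simp [sd]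

lemma sd_mono (h1 : Real.logb 3 2 ≤ t) {k l : ℕ} (hk : 1 ≤ k) (hkl : k ≤ l) :
    sd t l ≤ sd t k := by
  have hk0 : (0:ℝ) < (k:ℝ) := by exact_mod_cast hk
  have hl0 : (0:ℝ) < (l:ℝ) := by exact_mod_cast (hk.trans hkl)
  have hcast : (k:ℝ) ≤ (l:ℝ) := by exact_mod_cast hkl
  rw [sd, sd, Real.rpow_neg hk0.le, Real.rpow_neg hl0.le]
  have := Real.rpow_le_rpow hk0.le hcast (t_pos h1).le
  exact inv_anti₀ (Real.rpow_pos_of_pos hk0 t) this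

lemma sd_sq {k : ℕ} (hk : 1 ≤ k) : (sd t k)^2 = (k:ℝ) ^ (-(2*t)) := by
  have hk0 : (0:ℝ) < (k:ℝ) := by exact_mod_cast hk
  rw [sd, sq, ← Real.rpow_add hk0]
  congr 1; ring

lemma SR_bound (h1 : Real.logb 3 2 ≤ t) (h2 : t ≤ 2/3) {m : ℕ} (hm : 1 ≤ m) :
    SR t m ≤ 1 + ((m:ℝ)^(1-t) - 1)/(1-t) := by
  have hq0 : (0:ℝ) < 1 - t := by linarith
  induction m, hm using Nat.le_induction with
  | base => simp [SR, sd]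
  | succ m hm ih =>
    have hkey := tele_up h1 h2 (k := m+1) (by omega)
    have hc1 : ((m+1:ℕ):ℝ) = (m:ℝ)+1 := by push_cast; ring
    rw [hc1] at hkey
    have hsd : sd t (m+1) ≤ (((m:ℝ)+1)^(1-t) - (m:ℝ)^(1-t))/(1-t) := by
      rw [le_div_iff₀ hq0, sd, hc1]
      have : (m:ℝ)+1-1 = (m:ℝ) := by ring
      rw [this] at hkey
      linarith
    have hsum : SR t (m+1) = SR t m + sd t (m+1) := Finset.sum_range_succ _ _
    have e : ((m:ℝ)^(1-t) - 1)/(1-t) + (((m:ℝ)+1)^(1-t) - (m:ℝ)^(1-t))/(1-t)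
        = (((m:ℝ)+1)^(1-t) - 1)/(1-t) := by ring
    have hc2 : ((m+1:ℕ):ℝ) = (m:ℝ)+1 := hc1
    rw [hsum, hc2]
    linarith

lemma zeta_eq (t : ℝ) : zetaR (2*t) = ∑' k:ℕ, (((k+1:ℕ)):ℝ)^(-(2*t)) := by
  rw [zetaR, ← Equiv.tsum_eq Equiv.pnatEquivNat.symm (fun n : ℕ+ => (n:ℝ)^(-(2*t)))]
  exact tsum_congr fun k => by congr 1

lemma summable_shift (h1 : Real.logb 3 2 ≤ t) :
    Summable (fun k:ℕ => (((k+1:ℕ)):ℝ)^(-(2*t))) := by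
  have h2t : (-(2*t)) < -1 := by have := half_lt_t h1; linarith
  have hs : Summable (fun k:ℕ => ((k:ℝ))^(-(2*t))) := Real.summable_nat_rpow.2 h2t
  exact (summable_nat_add_iff 1).2 hs

lemma tail_lb (h1 : Real.logb 3 2 ≤ t) (h2 : t ≤ 2/3) (m : ℕ) :
    ((m:ℝ)+1) ^ (1-2*t) / (2*t-1) ≤ zetaR (2*t) - SA t m := by
  have hr0 : (0:ℝ) < 2*t-1 := by have := half_lt_t h1; linarith
  have hsum := summable_shift h1
  have hSA : SA t m = ∑ i ∈ Finset.range m, (((i+1:ℕ)):ℝ)^(-(2*t)) := by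
    apply Finset.sum_congr rfl
    intro i _
    exact sd_sq (by omega)
  have hsplit := Summable.sum_add_tsum_nat_add (f := fun k:ℕ => (((k+1:ℕ)):ℝ)^(-(2*t))) m hsum
  have hzeta : zetaR (2*t) - SA t m = ∑' i:ℕ, (((i+m+1:ℕ)):ℝ)^(-(2*t)) := by
    rw [zeta_eq t, hSA, ← hsplit]; ring
  rw [hzeta]
  -- telescoping lower bound
  set r : ℝ := 2*t-1 with hrdef
  set g : ℕ → ℝ := fun i => (((i+m+1:ℕ)):ℝ)^(-r) / r with hg
  have hstep : ∀ i:ℕ, g i - g (i+1) ≤ (((i+m+1:ℕ)):ℝ)^(-(2*t)) := by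
    intro i
    have hk : 1 ≤ i+m+1 := by omega
    have h := tele_down h1 h2 (k := i+m+1) hk
    have hc : ((i+m+1:ℕ):ℝ) + 1 = ((i+1+m+1:ℕ):ℝ) := by push_cast; ring
    rw [hc] at h
    rw [hg]
    simp only []
    rw [div_sub_div_same, div_le_iff₀ hr0]
    calc (((i+m+1:ℕ)):ℝ)^(-r) - (((i+1+m+1:ℕ)):ℝ)^(-r)
        ≤ r * (((i+m+1:ℕ)):ℝ)^(-(2*t)) := by rw [hrdef]; exact h
      _ = (((i+m+1:ℕ)):ℝ)^(-(2*t)) * r := by ring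
  have hpartial : ∀ M:ℕ, g 0 - g M ≤ ∑' i:ℕ, (((i+m+1:ℕ)):ℝ)^(-(2*t)) := by
    intro M
    have htel : ∑ i ∈ Finset.range M, (g i - g (i+1)) = g 0 - g M :=
      Finset.sum_range_sub' g M
    have hsum2 : Summable (fun i:ℕ => (((i+m+1:ℕ)):ℝ)^(-(2*t))) :=
      (summable_nat_add_iff m).2 hsum
    calc g 0 - g M = ∑ i ∈ Finset.range M, (g i - g (i+1)) := htel.symm
      _ ≤ ∑ i ∈ Finset.range M, (((i+m+1:ℕ)):ℝ)^(-(2*t)) :=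
          Finset.sum_le_sum (fun i _ => hstep i)
      _ ≤ ∑' i:ℕ, (((i+m+1:ℕ)):ℝ)^(-(2*t)) :=
          Summable.sum_le_tsum _ (fun i _ => Real.rpow_nonneg (Nat.cast_nonneg _) _) hsum2
  have hlim : Tendsto (fun M:ℕ => g 0 - g M) atTop (nhds (g 0)) := by
    have h1' : Tendsto (fun M:ℕ => ((M:ℝ) + ((m:ℝ)+1))) atTop atTop :=
      tendsto_atTop_add_const_right _ _ tendsto_natCast_atTop_atTop
    have h2' : Tendsto (fun x:ℝ => x^(-r)) atTop (nhds 0) := tendsto_rpow_neg_atTop hr0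
    have h3' : Tendsto (fun M:ℕ => g M) atTop (nhds 0) := by
      have : (fun M:ℕ => g M) = fun M:ℕ => (((M:ℝ) + ((m:ℝ)+1))^(-r)) / r := by
        funext M; rw [hg]; simp only []; congr 2; push_cast; ring
      rw [this]
      simpa using (h2'.comp h1').div_const r
    simpa using tendsto_const_nhds.sub h3'
  have hfinal : g 0 ≤ ∑' i:ℕ, (((i+m+1:ℕ)):ℝ)^(-(2*t)) :=
    le_of_tendsto' hlim hpartial
  have hg0 : g 0 = ((m:ℝ)+1) ^ (1-2*t) / (2*t-1) := by
    rw [hg]; simp only []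
    rw [hrdef]
    congr 2
    · push_cast; ring
    · ring
  rw [← hg0]
  exact hfinal

lemma star (h1 : Real.logb 3 2 ≤ t) (h2 : t ≤ 2/3) (m : ℕ) :
    sd t (m+1) * (1 + SR t m) < zetaR (2*t) - SA t m := by
  have hth := half_lt_t h1
  have hr0 : (0:ℝ) < 2*t-1 := by linarith
  have hq0 : (0:ℝ) < 1-t := by linarith
  have htail := tail_lb h1 h2 m
  rcases Nat.eq_zero_or_pos m with hm | hm
  · subst hm
    have : SR t 0 = 0 := by simp [SR]
    have hsd1 : sd t (0+1) = 1 := sd_one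
    rw [this, hsd1]
    have h10 : ((0:ℕ):ℝ)+1 = 1 := by norm_num
    rw [h10, Real.one_rpow] at htail
    have : (1:ℝ) < 1/(2*t-1) := by
      rw [lt_div_iff₀ hr0]; linarith
    linarith
  · -- m ≥ 1
    have hN0 : (0:ℝ) < (m:ℝ)+1 := by positivity
    have hNt : (0:ℝ) < ((m:ℝ)+1)^(-t) := Real.rpow_pos_of_pos hN0 _
    set z : ℝ := ((m:ℝ)+1)^(1-t) with hz
    set y : ℝ := (m:ℝ)^(1-t) with hy
    have hyz : y ≤ z := by
      rw [hy, hz]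
      exact Real.rpow_le_rpow (Nat.cast_nonneg m) (by linarith) hq0.le
    have hz1 : (1:ℝ) ≤ z := by
      rw [hz]
      nth_rewrite 1 [show (1:ℝ) = (1:ℝ)^(1-t) from (Real.one_rpow _).symm]
      exact Real.rpow_le_rpow (by norm_num) (by linarith) hq0.le
    have hSR := SR_bound h1 h2 hm
    -- core: 2 + (y-1)/(1-t) < z/(2*t-1)
    have hcore : 2 + (y-1)/(1-t) < z/(2*t-1) := by
      have hb2 : (2:ℝ) < 1/(1-t) := by rw [lt_div_iff₀ hq0]; linarith
      have hzq : z/(1-t) ≤ z/(2*t-1) := by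
        rw [div_le_div_iff₀ hq0 hr0]
        nlinarith [hz1]
      have hyq : (y-1)/(1-t) ≤ (z-1)/(1-t) := by gcongr
      have hsub : (z-1)/(1-t) = z/(1-t) - 1/(1-t) := by ring
      linarith
    -- assemble
    have hNt' : (0:ℝ) ≤ ((m:ℝ)+1)^(-t) := hNt.le
    have hsdeq : sd t (m+1) = ((m:ℝ)+1)^(-t) := by
      rw [sd]; congr 1; push_cast; ring
    have hexp : ((m:ℝ)+1)^(-t) * z = ((m:ℝ)+1)^(1-2*t) := by
      rw [hz, ← Real.rpow_add hN0]; congr 1; ring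
    have h1SR : 1 + SR t m ≤ 2 + (y-1)/(1-t) := by
      rw [hy]; linarith
    have hmono : sd t (m+1) * (1 + SR t m) ≤ ((m:ℝ)+1)^(-t) * (2 + (y-1)/(1-t)) := by
      rw [hsdeq]
      apply mul_le_mul_of_nonneg_left h1SR hNt'
    have hlt : ((m:ℝ)+1)^(-t) * (2 + (y-1)/(1-t)) < ((m:ℝ)+1)^(-t) * (z/(2*t-1)) :=
      mul_lt_mul_of_pos_left hcore hNt
    have heq2 : ((m:ℝ)+1)^(-t) * (z/(2*t-1)) = ((m:ℝ)+1)^(1-2*t)/(2*t-1) := by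
      rw [← hexp]; ring
    rw [heq2] at hlt
    calc sd t (m+1) * (1 + SR t m) ≤ ((m:ℝ)+1)^(-t) * (2 + (y-1)/(1-t)) := hmono
      _ < ((m:ℝ)+1)^(1-2*t)/(2*t-1) := hlt
      _ ≤ zetaR (2*t) - SA t m := htail


end Arith

structure Row where
  x : ℝ
  y : ℝ
  w : ℝ
  h : ℝ
  horiz : Bool

namespace Row

def ht (r : Row) : ℝ := if r.horiz then r.h else r.w
def len (r : Row) : ℝ := if r.horiz then r.w else r.h
def area (r : Row) : ℝ := r.w * r.h
def openRect (r : Row) : Set (ℝ × ℝ) := Set.Ioo r.x (r.x + r.w) ×ˢ Set.Ioo r.y (r.y + r.h)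

lemma area_eq (r : Row) : r.area = r.len * r.ht := by
  cases hb : r.horiz <;> simp [area, len, ht, hb] <;> ring

end Row

def sqO (p : ℝ × ℝ) (s : ℝ) : Set (ℝ × ℝ) :=
  Set.Ioo p.1 (p.1 + s) ×ˢ Set.Ioo p.2 (p.2 + s)

lemma Ioo_disj {a b c d : ℝ} (h : b ≤ c) : Disjoint (Set.Ioo a b) (Set.Ioo c d) := by
  rw [Set.disjoint_left]
  intro x hx hx'
  have h2 := hx.2
  have h3 := hx'.1
  linarith

lemma disj_prod_left {s u t' v : Set ℝ} (h : Disjoint s u) :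
    Disjoint (s ×ˢ t') (u ×ˢ v) := by
  rw [Set.disjoint_left]
  rintro ⟨p, q⟩ ⟨h1, h2⟩ ⟨h3, h4⟩
  exact Set.disjoint_left.1 h h1 h3

lemma disj_prod_right {s u t' v : Set ℝ} (h : Disjoint t' v) :
    Disjoint (s ×ˢ t') (u ×ˢ v) := by
  rw [Set.disjoint_left]
  rintro ⟨p, q⟩ ⟨h1, h2⟩ ⟨h3, h4⟩
  exact Set.disjoint_left.1 h h2 h4

structure St where
  rows : List Row
  pos : ℕ → ℝ × ℝ

structure Inv (t : ℝ) (m : ℕ) (st : St) : Prop where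
  rows_geom : ∀ r ∈ st.rows, 0 ≤ r.x ∧ 0 ≤ r.y ∧ 0 ≤ r.w ∧ 0 ≤ r.h ∧
      r.x + r.w ≤ zetaR (2*t) ∧ r.y + r.h ≤ 1 ∧ sd t (m+1) ≤ r.ht
  area_sum : (st.rows.map Row.area).sum = zetaR (2*t) - SA t m
  ht_sum : (st.rows.map Row.ht).sum = 1 + SR t m
  sq_in : ∀ k, 1 ≤ k → k ≤ m → 0 ≤ (st.pos k).1 ∧ (st.pos k).1 + sd t k ≤ zetaR (2*t)
      ∧ 0 ≤ (st.pos k).2 ∧ (st.pos k).2 + sd t k ≤ 1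
  sq_disj : ∀ k l, 1 ≤ k → k < l → l ≤ m →
      Disjoint (sqO (st.pos k) (sd t k)) (sqO (st.pos l) (sd t l))
  sq_row_disj : ∀ k, 1 ≤ k → k ≤ m → ∀ r ∈ st.rows,
      Disjoint (sqO (st.pos k) (sd t k)) r.openRect
  row_disj : st.rows.Pairwise fun r r' => Disjoint r.openRect r'.openRect

/-- generic assembly: given a split row and suitable replacement rows `A`, `B`,
the invariant advances. -/
theorem assemble {t : ℝ} (h1 : Real.logb 3 2 ≤ t) (m : ℕ) (st : St)
    (hI : Inv t m st) (r : Row) (l1 l2 : List Row) (hl : st.rows = l1 ++ r :: l2)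
    (hsw : sd t (m+1) ≤ r.w) (hsh : sd t (m+1) ≤ r.h)
    (A B : Row)
    (hA_sub : A.openRect ⊆ r.openRect) (hB_sub : B.openRect ⊆ r.openRect)
    (hAB_disj : Disjoint A.openRect B.openRect)
    (hnewA_disj : Disjoint (sqO (r.x, r.y) (sd t (m+1))) A.openRect)
    (hnewB_disj : Disjoint (sqO (r.x, r.y) (sd t (m+1))) B.openRect)
    (hA_geom : 0 ≤ A.x ∧ 0 ≤ A.y ∧ 0 ≤ A.w ∧ 0 ≤ A.h ∧
      A.x + A.w ≤ zetaR (2*t) ∧ A.y + A.h ≤ 1 ∧ sd t (m+1+1) ≤ A.ht)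
    (hB_geom : 0 ≤ B.x ∧ 0 ≤ B.y ∧ 0 ≤ B.w ∧ 0 ≤ B.h ∧
      B.x + B.w ≤ zetaR (2*t) ∧ B.y + B.h ≤ 1 ∧ sd t (m+1+1) ≤ B.ht)
    (harea : A.area + B.area = r.area - (sd t (m+1))^2)
    (hhts : A.ht + B.ht = r.ht + sd t (m+1)) :
    ∃ st' : St, Inv t (m+1) st' ∧ ∀ k, k ≤ m → st'.pos k = st.pos k := by
  have hr_mem : r ∈ st.rows := by rw [hl]; exact List.mem_append.2 (Or.inr (List.mem_cons_self))
  obtain ⟨hx0, hy0, hw0, hh0, hxw, hyh, hht⟩ := hI.rows_geom r hr_mem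
  set s : ℝ := sd t (m+1) with hsdef
  have hs0 : 0 < s := sd_pos' (by omega)
  have hr_disj : ∀ r' ∈ l1 ++ l2, Disjoint r.openRect r'.openRect := by
    intro r' hr'
    have hp := hI.row_disj
    rw [hl, List.pairwise_append] at hp
    obtain ⟨hp1, hp2, hp3⟩ := hp
    rcases List.mem_append.1 hr' with h' | h'
    · exact (hp3 r' h' r (List.mem_cons_self)).symm
    · exact (List.pairwise_cons.1 hp2).1 r' h'
  have hmem_orig : ∀ r' ∈ l1 ++ l2, r' ∈ st.rows := by
    intro r' hr'
    rw [hl]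
    rcases List.mem_append.1 hr' with h' | h'
    · exact List.mem_append.2 (Or.inl h')
    · exact List.mem_append.2 (Or.inr (List.mem_cons_of_mem _ h'))
  have hnew_sub : sqO (r.x, r.y) s ⊆ r.openRect := by
    rw [sqO, Row.openRect]
    apply Set.prod_mono
    · exact Set.Ioo_subset_Ioo (le_refl _) (by simp only []; linarith)
    · exact Set.Ioo_subset_Ioo (le_refl _) (by simp only []; linarith)
  set pos' : ℕ → ℝ × ℝ := Function.update st.pos (m+1) (r.x, r.y) with hpos
  have hpos_new : pos' (m+1) = (r.x, r.y) := by rw [hpos]; simp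
  have hpos_old : ∀ k, k ≤ m → pos' k = st.pos k := by
    intro k hk; rw [hpos]; exact Function.update_of_ne (by omega) _ _
  have hsd_next : sd t (m+1+1) ≤ s := by
    rw [hsdef]; exact sd_mono h1 (by omega) (by omega)
  refine ⟨⟨A :: B :: (l1 ++ l2), pos'⟩, ?_, hpos_old⟩
  constructor
  · intro r' hr'
    dsimp only at hr'
    rw [List.mem_cons, List.mem_cons] at hr'
    rcases hr' with h' | h' | h'
    · subst h'; exact hA_geom
    · subst h'; exact hB_geom
    · have hmem := hmem_orig r' h'
      obtain ⟨a1, a2, a3, a4, a5, a6, a7⟩ := hI.rows_geom r' hmem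
      exact ⟨a1, a2, a3, a4, a5, a6, le_trans hsd_next a7⟩
  · have horig : (st.rows.map Row.area).sum
        = ((l1 ++ l2).map Row.area).sum + r.area := by
      rw [hl]; simp [List.sum_append]; ring
    have hSA' : SA t (m+1) = SA t m + s^2 := by
      rw [SA, Finset.sum_range_succ]; rfl
    have := hI.area_sum
    rw [horig] at this
    simp only [List.map_cons, List.sum_cons]
    rw [hSA']
    linarith [harea]
  · have horig : (st.rows.map Row.ht).sum
        = ((l1 ++ l2).map Row.ht).sum + r.ht := by
      rw [hl]; simp [List.sum_append]; ring
    have hSR' : SR t (m+1) = SR t m + s := by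
      rw [SR, Finset.sum_range_succ]; rfl
    have := hI.ht_sum
    rw [horig] at this
    simp only [List.map_cons, List.sum_cons]
    rw [hSR']
    linarith [hhts]
  · intro k hk1 hk2
    dsimp only
    rcases Nat.lt_or_ge k (m+1) with hk | hk
    · have hk' : k ≤ m := by omega
      rw [hpos_old k hk']
      exact hI.sq_in k hk1 hk'
    · have hk' : k = m+1 := by omega
      subst hk'
      rw [hpos_new]
      refine ⟨hx0, ?_, hy0, ?_⟩
      · calc r.x + sd t (m+1) ≤ r.x + r.w := by rw [← hsdef]; linarith
          _ ≤ zetaR (2*t) := hxw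
      · calc r.y + sd t (m+1) ≤ r.y + r.h := by rw [← hsdef]; linarith
          _ ≤ 1 := hyh
  · intro k l hk1 hkl hlm
    dsimp only
    rcases Nat.lt_or_ge l (m+1) with hl' | hl'
    · have hle : l ≤ m := by omega
      rw [hpos_old k (by omega), hpos_old l hle]
      exact hI.sq_disj k l hk1 hkl hle
    · have hleq : l = m+1 := by omega
      subst hleq
      have hk' : k ≤ m := by omega
      rw [hpos_old k hk', hpos_new]
      have hold := hI.sq_row_disj k hk1 hk' r hr_mem
      exact hold.mono_right hnew_sub
  · intro k hk1 hk2 r' hr'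
    dsimp only at hr' ⊢
    rcases Nat.lt_or_ge k (m+1) with hkm | hkm
    · have hk' : k ≤ m := by omega
      rw [hpos_old k hk']
      have hold : Disjoint (sqO (st.pos k) (sd t k)) r.openRect :=
        hI.sq_row_disj k hk1 hk' r hr_mem
      rw [List.mem_cons, List.mem_cons] at hr'
      rcases hr' with h' | h' | h'
      · subst h'; exact hold.mono_right hA_sub
      · subst h'; exact hold.mono_right hB_sub
      · exact hI.sq_row_disj k hk1 hk' r' (hmem_orig r' h')
    · have hkeq : k = m+1 := by omega
      subst hkeq
      rw [hpos_new]
      rw [List.mem_cons, List.mem_cons] at hr'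
      rcases hr' with h' | h' | h'
      · subst h'; exact hnewA_disj
      · subst h'; exact hnewB_disj
      · exact ((hr_disj r' h').mono_left hnew_sub :)
  · dsimp only
    refine List.Pairwise.cons ?_ (List.Pairwise.cons ?_ ?_)
    · intro r' hr'
      rw [List.mem_cons] at hr'
      rcases hr' with h' | h'
      · subst h'; exact hAB_disj
      · exact ((hr_disj r' h').mono_left hA_sub :)
    · intro r' hr'
      exact ((hr_disj r' hr').mono_left hB_sub :)
    · have hsub : (l1 ++ l2).Sublist st.rows := by
        rw [hl]
        exact (List.sublist_cons_self r l2).append_left l1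
      exact hI.row_disj.sublist hsub





theorem step_ex {t : ℝ} (h1 : Real.logb 3 2 ≤ t) (h2 : t ≤ 2/3) (m : ℕ) (st : St)
    (hI : Inv t m st) :
    ∃ st' : St, Inv t (m+1) st' ∧ ∀ k, k ≤ m → st'.pos k = st.pos k := by
  set s : ℝ := sd t (m+1) with hsdef
  have hs0 : 0 < s := sd_pos' (by omega)
  have hsd_next : sd t (m+1+1) ≤ s := sd_mono h1 (by omega) (by omega)
  have hex : ∃ r ∈ st.rows, s ≤ r.len := by
    by_contra hcon
    push_neg at hcon
    have hsum : (st.rows.map Row.area).sum ≤ (st.rows.map (fun r => s * r.ht)).sum := by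
      apply List.sum_le_sum
      intro r hr
      have hht : 0 ≤ r.ht := le_trans hs0.le (hI.rows_geom r hr).2.2.2.2.2.2
      rw [Row.area_eq]
      exact mul_le_mul_of_nonneg_right (hcon r hr).le hht
    rw [List.sum_map_mul_left, hI.ht_sum, hI.area_sum] at hsum
    exact absurd hsum (not_le.2 (star h1 h2 m))
  obtain ⟨r, hr_mem, hr_len⟩ := hex
  obtain ⟨l1, l2, hl⟩ := List.append_of_mem hr_mem
  obtain ⟨hx0, hy0, hw0, hh0, hxw, hyh, hht⟩ := hI.rows_geom r hr_mem
  have hZ : r.x + r.w ≤ zetaR (2*t) := hxw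
  cases hb : r.horiz
  · -- vertical row : ht = w, len = h
    have hsw : s ≤ r.w := by rw [Row.ht, hb] at hht; simpa using hht
    have hsh : s ≤ r.h := by rw [Row.len, hb] at hr_len; simpa using hr_len
    refine assemble h1 m st hI r l1 l2 hl hsw hsh
      ⟨r.x, r.y + s, r.w, r.h - s, false⟩ ⟨r.x + s, r.y, r.w - s, s, true⟩
      ?_ ?_ ?_ ?_ ?_ ?_ ?_ ?_ ?_
    · -- A ⊆ r
      simp only [Row.openRect]
      apply Set.prod_mono
      · exact Set.Ioo_subset_Ioo le_rfl le_rfl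
      · exact Set.Ioo_subset_Ioo (by linarith) (by (try dsimp only); linarith)
    · simp only [Row.openRect]
      apply Set.prod_mono
      · exact Set.Ioo_subset_Ioo (by linarith) (by (try dsimp only); linarith)
      · exact Set.Ioo_subset_Ioo le_rfl (by (try dsimp only); linarith)
    · -- A (top) vs B (right-bottom) : A y-interval starts r.y+s, B y-interval ends r.y+s
      simp only [Row.openRect]
      apply disj_prod_right
      exact (Ioo_disj (by (try dsimp only); linarith)).symm
    · -- new square vs A : square y-interval ends r.y+s, A y starts r.y+s
      simp only [Row.openRect, sqO]
      apply disj_prod_right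
      exact Ioo_disj (by (try dsimp only); linarith)
    · -- new square vs B : x
      simp only [Row.openRect, sqO]
      apply disj_prod_left
      exact Ioo_disj (by (try dsimp only); linarith)
    · refine ⟨by (try dsimp only); linarith, by (try dsimp only); linarith, by (try dsimp only); linarith,
        by (try dsimp only); linarith, by (try dsimp only); linarith, by (try dsimp only); linarith, ?_⟩
      show sd t (m+1+1) ≤ r.w
      linarith
    · refine ⟨by (try dsimp only); linarith, by (try dsimp only); linarith, by (try dsimp only); linarith,
        by (try dsimp only); linarith, by (try dsimp only); linarith, by (try dsimp only); linarith, ?_⟩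
      show sd t (m+1+1) ≤ s
      exact hsd_next
    · show r.w * (r.h - s) + (r.w - s) * s = r.w * r.h - s^2
      ring
    · show r.w + s = r.ht + s
      rw [Row.ht, hb]; simp
  · -- horizontal row : ht = h, len = w
    have hsh : s ≤ r.h := by rw [Row.ht, hb] at hht; simpa using hht
    have hsw : s ≤ r.w := by rw [Row.len, hb] at hr_len; simpa using hr_len
    refine assemble h1 m st hI r l1 l2 hl hsw hsh
      ⟨r.x + s, r.y, r.w - s, r.h, true⟩ ⟨r.x, r.y + s, s, r.h - s, false⟩
      ?_ ?_ ?_ ?_ ?_ ?_ ?_ ?_ ?_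
    · simp only [Row.openRect]
      apply Set.prod_mono
      · exact Set.Ioo_subset_Ioo (by linarith) (by (try dsimp only); linarith)
      · exact Set.Ioo_subset_Ioo le_rfl le_rfl
    · simp only [Row.openRect]
      apply Set.prod_mono
      · exact Set.Ioo_subset_Ioo le_rfl (by (try dsimp only); linarith)
      · exact Set.Ioo_subset_Ioo (by linarith) (by (try dsimp only); linarith)
    · simp only [Row.openRect]
      apply disj_prod_left
      exact (Ioo_disj (by (try dsimp only); linarith)).symm
    · simp only [Row.openRect, sqO]
      apply disj_prod_left
      exact Ioo_disj (by (try dsimp only); linarith)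
    · simp only [Row.openRect, sqO]
      apply disj_prod_right
      exact Ioo_disj (by (try dsimp only); linarith)
    · refine ⟨by (try dsimp only); linarith, by (try dsimp only); linarith, by (try dsimp only); linarith,
        by (try dsimp only); linarith, by (try dsimp only); linarith, by (try dsimp only); linarith, ?_⟩
      show sd t (m+1+1) ≤ r.h
      linarith
    · refine ⟨by (try dsimp only); linarith, by (try dsimp only); linarith, by (try dsimp only); linarith,
        by (try dsimp only); linarith, by (try dsimp only); linarith, by (try dsimp only); linarith, ?_⟩
      show sd t (m+1+1) ≤ s
      exact hsd_next
    · show (r.w - s) * r.h + s * (r.h - s) = r.w * r.h - s^2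
      ring
    · show r.h + s = r.ht + s
      rw [Row.ht, hb]; simp

/-! ### initial state, chain, final theorem -/

lemma zeta_nonneg (t : ℝ) : 0 ≤ zetaR (2*t) :=
  tsum_nonneg fun n => Real.rpow_nonneg (by positivity) _

noncomputable def initSt (t : ℝ) : St := ⟨[⟨0, 0, zetaR (2*t), 1, true⟩], fun _ => (0, 0)⟩

lemma inv_init (t : ℝ) : Inv t 0 (initSt t) := by
  constructor
  · intro r hr
    rw [initSt, List.mem_singleton] at hr
    subst hr
    refine ⟨le_rfl, le_rfl, zeta_nonneg t, by norm_num, by simp, by norm_num, ?_⟩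
    show sd t (0+1) ≤ (1:ℝ)
    rw [sd_one]
  · simp [initSt, Row.area, SA]
  · simp [initSt, Row.ht, SR]
  · intro k hk1 hk2; omega
  · intro k l hk1 hkl hlm; omega
  · intro k hk1 hk2; omega
  · simp [initSt]

noncomputable def chain {t : ℝ} (h1 : Real.logb 3 2 ≤ t) (h2 : t ≤ 2/3) :
    (m : ℕ) → {st : St // Inv t m st}
  | 0 => ⟨initSt t, inv_init t⟩
  | (m+1) =>
      ⟨(step_ex h1 h2 m (chain h1 h2 m).1 (chain h1 h2 m).2).choose,
       (step_ex h1 h2 m (chain h1 h2 m).1 (chain h1 h2 m).2).choose_spec.1⟩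

lemma chain_succ_pos {t : ℝ} (h1 : Real.logb 3 2 ≤ t) (h2 : t ≤ 2/3) (m k : ℕ)
    (hk : k ≤ m) : (chain h1 h2 (m+1)).1.pos k = (chain h1 h2 m).1.pos k := by
  show (step_ex h1 h2 m (chain h1 h2 m).1 (chain h1 h2 m).2).choose.pos k = _
  exact (step_ex h1 h2 m (chain h1 h2 m).1 (chain h1 h2 m).2).choose_spec.2 k hk

lemma pos_stable {t : ℝ} (h1 : Real.logb 3 2 ≤ t) (h2 : t ≤ 2/3) (m k : ℕ)
    (hk : k ≤ m) : (chain h1 h2 m).1.pos k = (chain h1 h2 k).1.pos k := by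
  induction m with
  | zero => interval_cases k; rfl
  | succ m ih =>
    rcases Nat.lt_or_ge k (m+1) with h | h
    · rw [chain_succ_pos h1 h2 m k (by omega)]
      exact ih (by omega)
    · have : k = m+1 := by omega
      subst this; rfl

end PerfectPacking

/-- For every `t` with `log_3 2 ≤ t ≤ 2/3`, the squares of side `n^{-t}` (`n ≥ 1`) can be
packed perfectly into the rectangle `[0, ζ(2t)] × [0, 1]`. -/
theorem perfect_packing_range (t : ℝ) (ht₁ : Real.logb 3 2 ≤ t) (ht₂ : t ≤ 2 / 3) :
    ∃ x y : ℕ+ → ℝ,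
      (∀ n : ℕ+,
        Set.Icc (x n) (x n + (n : ℝ) ^ (-t)) ×ˢ
            Set.Icc (y n) (y n + (n : ℝ) ^ (-t)) ⊆
          Set.Icc (0 : ℝ) (zetaR (2 * t)) ×ˢ Set.Icc (0 : ℝ) 1) ∧
      (∀ m n : ℕ+, m ≠ n →
        Disjoint
          (Set.Ioo (x m) (x m + (m : ℝ) ^ (-t)) ×ˢ
            Set.Ioo (y m) (y m + (m : ℝ) ^ (-t)))
          (Set.Ioo (x n) (x n + (n : ℝ) ^ (-t)) ×ˢ
            Set.Ioo (y n) (y n + (n : ℝ) ^ (-t)))) := by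
  classical
  open PerfectPacking in
  refine ⟨fun n => ((chain ht₁ ht₂ (n:ℕ)).1.pos (n:ℕ)).1,
          fun n => ((chain ht₁ ht₂ (n:ℕ)).1.pos (n:ℕ)).2, ?_, ?_⟩
  · intro n
    have h1n : 1 ≤ (n:ℕ) := n.one_le
    have hin := (chain ht₁ ht₂ (n:ℕ)).2.sq_in (n:ℕ) h1n le_rfl
    have hsd : sd t (n:ℕ) = (n:ℝ)^(-t) := rfl
    rw [hsd] at hin
    obtain ⟨a1, a2, a3, a4⟩ := hin
    exact Set.prod_mono (Set.Icc_subset_Icc a1 a2) (Set.Icc_subset_Icc a3 a4)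
  · intro m n hmn
    have hne : (m:ℕ) ≠ (n:ℕ) := by exact_mod_cast hmn
    rcases Nat.lt_or_ge (m:ℕ) (n:ℕ) with h | h
    · have hd := (chain ht₁ ht₂ (n:ℕ)).2.sq_disj (m:ℕ) (n:ℕ) m.one_le h le_rfl
      rw [pos_stable ht₁ ht₂ (n:ℕ) (m:ℕ) h.le] at hd
      exact hd
    · have hlt : (n:ℕ) < (m:ℕ) := by omega
      have hd := (chain ht₁ ht₂ (m:ℕ)).2.sq_disj (n:ℕ) (m:ℕ) n.one_le hlt le_rfl
      rw [pos_stable ht₁ ht₂ (m:ℕ) (n:ℕ) hlt.le] at hd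
      exact hd.symm
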